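/- LP rounding for the completion-time outlier problem: let $(z, e)$ be a feasible fractional solution with $z_i \ge 0$, $e_{ij} \ge 0$, satisfying $e_{ij} + z_i + z_j \ge 1$ for all $i < j$ and $\sum_i z_i c_i \le C$. Define $S = \{i : z_i \ge 1/3\}$, $\tilde z_i = 1$ if $i \in S$ else $0$, and $\tilde e_{ij} = 1$ if $i \notin S$ and $j \notin S$, else $0$. Then $\tilde z_i \le 3 z_i$ for all $i$, $\tilde e_{ij} \le 3 e_{ij}$ for all $i<j$, and hence $\sum_{i\in S} c_i \le 3C$ and the rounded objective $\sum_{i<j} \tilde e_{ij} m_{ij} + \sum_i (1-\tilde z_i) a_i$ is at most $3$ times the fractional objective $\sum_{i<j} e_{ij} m_{ij} + \sum_i (1-z_i) a_i$, for any nonnegative coefficients $m_{ij}, a_i$. -/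

import Mathlib

/-- LP rounding for the completion-time outlier problem: rounding a feasible
fractional solution `(z, e)` at threshold `1/3` gives an integral solution whose
outlier cost is at most `3C` and whose objective is at most `3` times the
fractional objective, for any nonnegative coefficients `m, a`. -/
theorem outlier_lp_rounding {n : ℕ} (z : Fin n → ℝ) (e : Fin n → Fin n → ℝ)
    (c : Fin n → ℝ) (m : Fin n → Fin n → ℝ) (a : Fin n → ℝ) (C : ℝ)
    (hz : ∀ i, 0 ≤ z i) (hz1 : ∀ i, z i ≤ 1) (he : ∀ i j, 0 ≤ e i j)
    (hc : ∀ i, 0 ≤ c i) (hm : ∀ i j, 0 ≤ m i j) (ha : ∀ i, 0 ≤ a i)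
    (hC : 0 < C)
    (hcover : ∀ i j : Fin n, i < j → 1 ≤ e i j + z i + z j)
    (hbudget : ∑ i, z i * c i ≤ C)
    (S : Finset (Fin n)) (hS : S = Finset.univ.filter (fun i => 1/3 ≤ z i))
    (tz : Fin n → ℝ) (htz : ∀ i, tz i = if i ∈ S then 1 else 0)
    (te : Fin n → Fin n → ℝ)
    (hte : ∀ i j, te i j = if i ∉ S ∧ j ∉ S then 1 else 0) :
    (∀ i, tz i ≤ 3 * z i) ∧
    (∀ i j : Fin n, i < j → te i j ≤ 3 * e i j) ∧
    (∑ i ∈ S, c i ≤ 3 * C) ∧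
    ((∑ i, ∑ j ∈ Finset.univ.filter (fun j => i < j), te i j * m i j) +
       ∑ i, (1 - tz i) * a i ≤
     3 * ((∑ i, ∑ j ∈ Finset.univ.filter (fun j => i < j), e i j * m i j) +
       ∑ i, (1 - z i) * a i)) := by
  have hmemS : ∀ i : Fin n, i ∈ S ↔ 1/3 ≤ z i := by
    intro i; rw [hS]; simp
  have h1 : ∀ i, tz i ≤ 3 * z i := by
    intro i
    rw [htz]
    by_cases h : i ∈ S
    · rw [if_pos h]
      have := (hmemS i).mp h
      linarith
    · rw [if_neg h]
      have := hz i; linarith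
  have h2 : ∀ i j : Fin n, i < j → te i j ≤ 3 * e i j := by
    intro i j hij
    rw [hte]
    by_cases h : i ∉ S ∧ j ∉ S
    · rw [if_pos h]
      have hi : ¬ (1/3 ≤ z i) := fun hh => h.1 ((hmemS i).mpr hh)
      have hj : ¬ (1/3 ≤ z j) := fun hh => h.2 ((hmemS j).mpr hh)
      have := hcover i j hij
      push_neg at hi hj
      linarith
    · rw [if_neg h]
      have := he i j; linarith
  have h3 : ∑ i ∈ S, c i ≤ 3 * C := by
    have step : ∑ i ∈ S, c i ≤ ∑ i ∈ S, 3 * (z i * c i) := by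
      apply Finset.sum_le_sum
      intro i hi
      have hzi := (hmemS i).mp hi
      have := hc i
      nlinarith
    have step2 : ∑ i ∈ S, 3 * (z i * c i) ≤ ∑ i, 3 * (z i * c i) := by
      apply Finset.sum_le_sum_of_subset_of_nonneg (Finset.subset_univ S)
      intro i _ _
      have := hz i; have := hc i; positivity
    calc ∑ i ∈ S, c i ≤ ∑ i, 3 * (z i * c i) := le_trans step step2
      _ = 3 * ∑ i, z i * c i := by rw [Finset.mul_sum]
      _ ≤ 3 * C := by linarith
  refine ⟨h1, h2, h3, ?_⟩
  have hA : (∑ i, ∑ j ∈ Finset.univ.filter (fun j => i < j), te i j * m i j) ≤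
      3 * (∑ i, ∑ j ∈ Finset.univ.filter (fun j => i < j), e i j * m i j) := by
    rw [Finset.mul_sum]
    apply Finset.sum_le_sum
    intro i _
    rw [Finset.mul_sum]
    apply Finset.sum_le_sum
    intro j hj
    simp only [Finset.mem_filter] at hj
    have := h2 i j hj.2
    have := hm i j
    nlinarith
  have hB : (∑ i, (1 - tz i) * a i) ≤ 3 * ∑ i, (1 - z i) * a i := by
    rw [Finset.mul_sum]
    apply Finset.sum_le_sum
    intro i _
    rw [htz]
    by_cases h : i ∈ S
    · rw [if_pos h]
      have := hz1 i; have := ha i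
      nlinarith
    · rw [if_neg h]
      have hi : ¬ (1/3 ≤ z i) := fun hh => h ((hmemS i).mpr hh)
      push_neg at hi
      have := ha i
      nlinarith
  linarith
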